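/- (Inequalities (15)–(18) in the proof of Theorem 2) Consider a k-user memoryless interference channel given by a Markov kernel K from (ℝⁿ)^k to 𝒴₁. Fix ε with 0 < ε ≤ 1, and for each i = 1, …, k let μ_i′ and μ_i″ be probability measures on ℝⁿ and let X_i be the time-sharing input that equals X_i′ ~ μ_i′ when Q_i = 0 and X_i″ ~ μ_i″ when Q_i = 1, where Q₁, …, Q_k are independent Bernoulli(ε) variables and X₁, …, X_k are independent. Let Y₁ be the channel output when (X₁, …, X_k) is the input, and let Y₁′ be the output of the primary channel K̄′(·|x₁) = ∫⋯∫ K(·|x₁, x₂, …, x_k) dμ₂′(x₂)⋯dμ_k′(x_k) with input X₁′ ~ μ₁′. Then I(X₁; Y₁) ≥ (1 − ε)^k I(X₁′; Y₁′) − (k − 1) H₂(ε), where H₂(u) = −u log₂ u − (1 − u) log₂(1 − u) is the binary entropy function. -/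

import Mathlib

open MeasureTheory ProbabilityTheory
open scoped ENNReal NNReal

/-- Kullback–Leibler divergence between two measures, valued in `ℝ≥0∞`. -/
noncomputable def klDiv {Ω : Type*} [MeasurableSpace Ω] (μ ν : Measure Ω) : ℝ≥0∞ :=
  open scoped Classical in
  if μ ≪ ν ∧ Integrable (llr μ ν) μ then ENNReal.ofReal (∫ x, llr μ ν x ∂μ) else ⊤

/-- Mutual information `I(X₁;Y₁)` between the primary input `X₁` and the primary output `Y₁`
of a `k`-user memoryless interference channel `K`, when the `k` inputs are independent with
laws `μs i`.  The joint law of `(X₁, Y₁)` is the pushforward of `(Measure.pi μs) ⊗ₘ K` under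
`(x, y) ↦ (x 0, y)`; this equals the mutual information `I(μs 0, K̄)` of the primary channel
`K̄(·|x₁) = ∫⋯∫ K(·|x₁, x₂, …, x_k) dμs(x₂)⋯dμs(x_k)`. -/
noncomputable def primaryMI {k : ℕ} [NeZero k] {𝒳 𝒴 : Type*} [MeasurableSpace 𝒳]
    [MeasurableSpace 𝒴] (K : Kernel (Fin k → 𝒳) 𝒴) (μs : Fin k → Measure 𝒳) : ℝ≥0∞ :=
  klDiv (((Measure.pi μs) ⊗ₘ K).map (fun p => (p.1 0, p.2)))
    (((((Measure.pi μs) ⊗ₘ K).map (fun p => (p.1 0, p.2))).fst).prod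
      ((((Measure.pi μs) ⊗ₘ K).map (fun p => (p.1 0, p.2))).snd))

/-- The binary entropy function `H₂(u) = −u log₂ u − (1 − u) log₂ (1 − u)`. -/
noncomputable def binaryEntropy (u : ℝ) : ℝ :=
  -(u * Real.logb 2 u) - (1 - u) * Real.logb 2 (1 - u)

section GenericLLR

variable {α : Type*} {mα : MeasurableSpace α} {μ ν ξ : Measure α}

lemma myac_of_smul_le {c : ℝ≥0∞} (hc : c ≠ 0) (h : c • μ ≤ ν) : μ ≪ ν := by
  refine Measure.AbsolutelyContinuous.mk fun s _ hs => ?_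
  have h2 := h s
  rw [hs, Measure.smul_apply, smul_eq_mul, le_zero_iff, mul_eq_zero] at h2
  tauto

lemma myle_inv_smul {c : ℝ≥0∞} (hc : c ≠ 0) (hc' : c ≠ ∞) (h : c • μ ≤ ν) :
    μ ≤ c⁻¹ • ν := by
  intro s
  have h2 := h s
  rw [Measure.smul_apply, smul_eq_mul] at h2 ⊢
  calc μ s = c⁻¹ * (c * μ s) := by
        rw [← mul_assoc, ENNReal.inv_mul_cancel hc hc', one_mul]
    _ ≤ c⁻¹ * ν s := mul_le_mul_right h2 _

lemma mylintegral_neg_part_llr_le [IsFiniteMeasure μ] [IsFiniteMeasure ν] (hμν : μ ≪ ν) :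
    ∫⁻ x, ENNReal.ofReal (max (- llr μ ν x) 0) ∂μ ≤ ν Set.univ := by
  have hFm : Measurable (fun x => ENNReal.ofReal (max (- llr μ ν x) 0)) :=
    ((measurable_llr μ ν).neg.max measurable_const).ennreal_ofReal
  have hwd : ∫⁻ x, ENNReal.ofReal (max (- llr μ ν x) 0) ∂μ
      = ∫⁻ x, (μ.rnDeriv ν * fun x => ENNReal.ofReal (max (- llr μ ν x) 0)) x ∂ν := by
    nth_rewrite 1 [← Measure.withDensity_rnDeriv_eq μ ν hμν]
    exact lintegral_withDensity_eq_lintegral_mul _ (Measure.measurable_rnDeriv μ ν) hFm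
  rw [hwd]
  calc ∫⁻ x, (μ.rnDeriv ν * fun x => ENNReal.ofReal (max (- llr μ ν x) 0)) x ∂ν
      ≤ ∫⁻ _, 1 ∂ν := by
        refine lintegral_mono_ae ?_
        filter_upwards [Measure.rnDeriv_lt_top μ ν] with x hx
        simp only [Pi.mul_apply]
        set t : ℝ := (μ.rnDeriv ν x).toReal with ht
        have ht0 : 0 ≤ t := ENNReal.toReal_nonneg
        have h0 : μ.rnDeriv ν x = ENNReal.ofReal t := by
          rw [ht, ENNReal.ofReal_toReal hx.ne]
        have hreal : t * (-llr μ ν x ⊔ 0) ≤ 1 := by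
          have hllr : llr μ ν x = Real.log t := rfl
          rw [hllr]
          rcases eq_or_lt_of_le ht0 with h | h
          · simp [← h]
          · rcases le_or_gt (-Real.log t) 0 with h2 | h2
            · rw [max_eq_right h2]; simp
            · rw [max_eq_left h2.le]
              have h3 := Real.log_le_sub_one_of_pos (inv_pos.mpr h)
              rw [Real.log_inv] at h3
              have h4 : t * -Real.log t ≤ t * (t⁻¹ - 1) :=
                mul_le_mul_of_nonneg_left (by linarith) ht0
              have ht1 : t * (t⁻¹ - 1) = 1 - t := by field_simp
              nlinarith
        rw [h0, ← ENNReal.ofReal_mul ht0]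
        calc ENNReal.ofReal (t * (-llr μ ν x ⊔ 0)) ≤ ENNReal.ofReal 1 :=
              ENNReal.ofReal_le_ofReal hreal
          _ ≤ 1 := by simp
    _ = ν Set.univ := by simp

lemma myintegrable_llr_of_ae_bound [IsFiniteMeasure μ] [IsFiniteMeasure ν] (hμν : μ ≪ ν)
    {C : ℝ} (hC : ∀ᵐ x ∂μ, llr μ ν x ≤ C) : Integrable (llr μ ν) μ := by
  refine ⟨(measurable_llr μ ν).aestronglyMeasurable, ?_⟩
  rw [hasFiniteIntegral_iff_norm]
  have hb : ∀ᵐ x ∂μ, ENNReal.ofReal ‖llr μ ν x‖ ≤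
      ENNReal.ofReal (max C 0) + ENNReal.ofReal (max (- llr μ ν x) 0) := by
    filter_upwards [hC] with x hx
    rw [← ENNReal.ofReal_add (le_max_right _ _) (le_max_right _ _)]
    refine ENNReal.ofReal_le_ofReal ?_
    rw [Real.norm_eq_abs]
    rcases le_or_gt 0 (llr μ ν x) with h | h
    · rw [abs_of_nonneg h]
      have : llr μ ν x ≤ max C 0 := le_trans hx (le_max_left _ _)
      nlinarith [le_max_right (- llr μ ν x) 0]
    · rw [abs_of_neg h]
      have : - llr μ ν x ≤ max (- llr μ ν x) 0 := le_max_left _ _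
      nlinarith [le_max_right C 0]
  calc ∫⁻ x, ENNReal.ofReal ‖llr μ ν x‖ ∂μ
      ≤ ∫⁻ x, (ENNReal.ofReal (max C 0) + ENNReal.ofReal (max (- llr μ ν x) 0)) ∂μ :=
        lintegral_mono_ae hb
    _ = ENNReal.ofReal (max C 0) * μ Set.univ + ∫⁻ x, ENNReal.ofReal (max (- llr μ ν x) 0) ∂μ := by
        rw [lintegral_add_left (by exact measurable_const)]
        simp
    _ ≤ ENNReal.ofReal (max C 0) * μ Set.univ + ν Set.univ := by
        exact add_le_add_right (mylintegral_neg_part_llr_le hμν) _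
    _ < ⊤ := by
        refine ENNReal.add_lt_top.mpr ⟨?_, measure_lt_top _ _⟩
        exact ENNReal.mul_lt_top ENNReal.ofReal_lt_top (measure_lt_top _ _)

lemma myintegral_llr_nonneg [IsProbabilityMeasure μ] [IsProbabilityMeasure ν] (hμν : μ ≪ ν)
    (hint : Integrable (llr μ ν) μ) : 0 ≤ ∫ x, llr μ ν x ∂μ := by
  set f : α → ℝ := fun x => (μ.rnDeriv ν x).toReal with hf
  have hfm : Measurable f := (Measure.measurable_rnDeriv μ ν).ennreal_toReal
  have hlin : ∫⁻ x, ENNReal.ofReal (f x)⁻¹ ∂μ ≤ 1 := by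
    conv_lhs => rw [← Measure.withDensity_rnDeriv_eq μ ν hμν]
    rw [lintegral_withDensity_eq_lintegral_mul _ (Measure.measurable_rnDeriv μ ν)
      (by exact hfm.inv.ennreal_ofReal)]
    calc ∫⁻ x, (μ.rnDeriv ν * fun x => ENNReal.ofReal (f x)⁻¹) x ∂ν ≤ ∫⁻ _, 1 ∂ν := by
          refine lintegral_mono_ae ?_
          filter_upwards [Measure.rnDeriv_lt_top μ ν] with x hx
          simp only [Pi.mul_apply]
          rcases eq_or_ne (μ.rnDeriv ν x) 0 with h0 | h0
          · simp [h0]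
          · have hpos : 0 < f x := ENNReal.toReal_pos h0 hx.ne
            have : ENNReal.ofReal (f x)⁻¹ = (μ.rnDeriv ν x)⁻¹ := by
              rw [ENNReal.ofReal_inv_of_pos hpos, hf]
              simp only []
              rw [ENNReal.ofReal_toReal hx.ne]
            rw [this, ENNReal.mul_inv_cancel h0 hx.ne]
      _ = 1 := by simp
  have hint_inv : Integrable (fun x => (f x)⁻¹) μ := by
    refine ⟨hfm.inv.aestronglyMeasurable, ?_⟩
    rw [hasFiniteIntegral_iff_norm]
    have : ∀ x, ENNReal.ofReal ‖(f x)⁻¹‖ = ENNReal.ofReal (f x)⁻¹ := by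
      intro x
      rw [Real.norm_eq_abs, abs_of_nonneg (inv_nonneg.mpr ENNReal.toReal_nonneg)]
    rw [lintegral_congr this]
    exact lt_of_le_of_lt hlin (by norm_num)
  have key : ∀ᵐ x ∂μ, 1 - (f x)⁻¹ ≤ llr μ ν x := by
    filter_upwards [Measure.rnDeriv_pos hμν, hμν.ae_le (Measure.rnDeriv_lt_top μ ν)]
      with x hpos hlt
    have hf0 : 0 < f x := ENNReal.toReal_pos hpos.ne' hlt.ne
    have h := Real.log_le_sub_one_of_pos (inv_pos.mpr hf0)
    rw [Real.log_inv] at h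
    have hllr : llr μ ν x = Real.log (f x) := rfl
    rw [hllr]; linarith
  have h1 : ∫ x, (1 - (f x)⁻¹) ∂μ ≤ ∫ x, llr μ ν x ∂μ :=
    integral_mono_ae ((integrable_const 1).sub hint_inv) hint key
  have h2 : ∫ x, (f x)⁻¹ ∂μ ≤ 1 := by
    rw [integral_eq_lintegral_of_nonneg_ae
      (Filter.Eventually.of_forall fun x => inv_nonneg.mpr ENNReal.toReal_nonneg)
      hfm.inv.aestronglyMeasurable]
    calc (∫⁻ x, ENNReal.ofReal (f x)⁻¹ ∂μ).toReal ≤ (1 : ℝ≥0∞).toReal :=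
          ENNReal.toReal_mono (by norm_num) hlin
      _ = 1 := by simp
  rw [integral_sub (integrable_const 1) hint_inv, integral_const] at h1
  simp only [probReal_univ, ENNReal.toReal_one, smul_eq_mul, one_mul] at h1
  linarith

lemma myllr_add_llr [SigmaFinite μ] [SigmaFinite ν] [SigmaFinite ξ]
    (h1 : μ ≪ ν) (h2 : ν ≪ ξ) :
    llr μ ξ =ᵐ[μ] fun x => llr μ ν x + llr ν ξ x := by
  have hmul := (h1.trans h2).ae_le (Measure.rnDeriv_mul_rnDeriv h1 (κ := ξ))
  filter_upwards [hmul, Measure.rnDeriv_pos h1, h1.ae_le (Measure.rnDeriv_pos h2),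
    h1.ae_le (Measure.rnDeriv_lt_top μ ν), (h1.trans h2).ae_le (Measure.rnDeriv_lt_top ν ξ)]
    with x hx hp1 hp2 hl1 hl2
  have e1 : llr μ ξ x = Real.log ((μ.rnDeriv ξ x).toReal) := rfl
  rw [e1, ← hx]
  simp only [Pi.mul_apply]
  rw [ENNReal.toReal_mul,
    Real.log_mul (by exact (ENNReal.toReal_pos hp1.ne' hl1.ne).ne')
      (by exact (ENNReal.toReal_pos hp2.ne' hl2.ne).ne')]
  rfl

lemma myllr_le_of_smul_le {c : ℝ} (hc : 0 < c) (hc1 : c ≤ 1)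
    [IsFiniteMeasure μ] [IsFiniteMeasure ν]
    (h : ENNReal.ofReal c • μ ≤ ν) : ∀ᵐ x ∂μ, llr μ ν x ≤ Real.log c⁻¹ := by
  have hc0 : ENNReal.ofReal c ≠ 0 := by simp [ENNReal.ofReal_eq_zero, not_le, hc]
  have hμν : μ ≪ ν := myac_of_smul_le hc0 h
  have h1 : (ENNReal.ofReal c • μ).rnDeriv ν ≤ᵐ[ν] 1 := Measure.rnDeriv_le_one_of_le h
  have h2 := Measure.rnDeriv_smul_left_of_ne_top μ ν (r := ENNReal.ofReal c) ENNReal.ofReal_ne_top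
  filter_upwards [hμν.ae_le h1, hμν.ae_le h2] with x hx1 hx2
  rw [hx2] at hx1
  simp only [Pi.smul_apply, smul_eq_mul, Pi.one_apply] at hx1
  have hrn : μ.rnDeriv ν x ≤ ENNReal.ofReal c⁻¹ := by
    rw [ENNReal.ofReal_inv_of_pos hc]
    rw [mul_comm] at hx1
    exact ENNReal.le_inv_iff_mul_le.mpr hx1
  have ht : (μ.rnDeriv ν x).toReal ≤ c⁻¹ := by
    calc (μ.rnDeriv ν x).toReal ≤ (ENNReal.ofReal c⁻¹).toReal :=
          ENNReal.toReal_mono ENNReal.ofReal_ne_top hrn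
      _ = c⁻¹ := ENNReal.toReal_ofReal (by positivity)
  have hc1' : (1 : ℝ) ≤ c⁻¹ := by
    rw [le_inv_comm₀ one_pos hc, inv_one]; exact hc1
  have hllr : llr μ ν x = Real.log ((μ.rnDeriv ν x).toReal) := rfl
  rw [hllr]
  rcases eq_or_lt_of_le (ENNReal.toReal_nonneg (a := μ.rnDeriv ν x)) with h | h
  · rw [← h, Real.log_zero]
    exact Real.log_nonneg hc1'
  · exact Real.log_le_log h ht

end GenericLLR

section ProdLemmas

variable {X Y : Type*} [MeasurableSpace X] [MeasurableSpace Y]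

lemma mywithDensity_prod {μ1 : Measure X} {μ2 : Measure Y} [SigmaFinite μ1] [SigmaFinite μ2]
    {f : X → ℝ≥0∞} {g : Y → ℝ≥0∞} (hf : Measurable f) (hg : Measurable g)
    [SigmaFinite (μ1.withDensity f)] [SigmaFinite (μ2.withDensity g)] :
    (μ1.withDensity f).prod (μ2.withDensity g)
      = (μ1.prod μ2).withDensity (fun z => f z.1 * g z.2) := by
  refine Measure.prod_eq (μ := μ1.withDensity f) (ν := μ2.withDensity g) fun s t hs ht => ?_
  rw [withDensity_apply _ (hs.prod ht), ← Measure.prod_restrict,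
    lintegral_prod_mul hf.aemeasurable hg.aemeasurable,
    withDensity_apply _ hs, withDensity_apply _ ht]

lemma myrnDeriv_prod {μ1 ν1 : Measure X} {μ2 ν2 : Measure Y} [IsFiniteMeasure μ1]
    [IsFiniteMeasure μ2] [IsFiniteMeasure ν1] [IsFiniteMeasure ν2]
    (h1 : μ1 ≪ ν1) (h2 : μ2 ≪ ν2) :
    (μ1.prod μ2).rnDeriv (ν1.prod ν2)
      =ᵐ[ν1.prod ν2] fun z => μ1.rnDeriv ν1 z.1 * μ2.rnDeriv ν2 z.2 := by
  have hprod : μ1.prod μ2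
      = (ν1.prod ν2).withDensity (fun z => μ1.rnDeriv ν1 z.1 * μ2.rnDeriv ν2 z.2) := by
    have e1 : μ1 = ν1.withDensity (μ1.rnDeriv ν1) := (Measure.withDensity_rnDeriv_eq _ _ h1).symm
    have e2 : μ2 = ν2.withDensity (μ2.rnDeriv ν2) := (Measure.withDensity_rnDeriv_eq _ _ h2).symm
    nth_rewrite 1 [e1]
    nth_rewrite 1 [e2]
    haveI : SigmaFinite (ν1.withDensity (μ1.rnDeriv ν1)) := by rw [← e1]; infer_instance
    haveI : SigmaFinite (ν2.withDensity (μ2.rnDeriv ν2)) := by rw [← e2]; infer_instance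
    exact mywithDensity_prod (Measure.measurable_rnDeriv _ _) (Measure.measurable_rnDeriv _ _)
  nth_rewrite 1 [hprod]
  exact Measure.rnDeriv_withDensity _
    ((Measure.measurable_rnDeriv _ _).comp measurable_fst |>.mul
      ((Measure.measurable_rnDeriv _ _).comp measurable_snd))

lemma myac_prod_marginals {π : Measure (X × Y)} {ν1 : Measure X} {ν2 : Measure Y}
    [IsFiniteMeasure π] [SigmaFinite ν1] [SigmaFinite ν2]
    (h : π ≪ ν1.prod ν2) : π ≪ π.fst.prod π.snd := by
  have hfst : π.fst ≪ ν1 := by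
    refine Measure.AbsolutelyContinuous.mk fun s hs h0 => ?_
    rw [Measure.fst_apply hs]
    refine h ?_
    rw [← Set.prod_univ, Measure.prod_prod, h0, zero_mul]
  have hsnd : π.snd ≪ ν2 := by
    refine Measure.AbsolutelyContinuous.mk fun s hs h0 => ?_
    rw [Measure.snd_apply hs]
    refine h ?_
    rw [← Set.univ_prod, Measure.prod_prod, h0, mul_zero]
  set ρ1 := π.fst.rnDeriv ν1 with hρ1
  set ρ2 := π.snd.rnDeriv ν2 with hρ2
  have hm1 : Measurable ρ1 := Measure.measurable_rnDeriv _ _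
  have hm2 : Measurable ρ2 := Measure.measurable_rnDeriv _ _
  have hZ1 : MeasurableSet (ρ1 ⁻¹' {0}) := hm1 (measurableSet_singleton 0)
  have hZ2 : MeasurableSet (ρ2 ⁻¹' {0}) := hm2 (measurableSet_singleton 0)
  have hfZ1 : π.fst (ρ1 ⁻¹' {0}) = 0 := by
    nth_rewrite 1 [← Measure.withDensity_rnDeriv_eq _ _ hfst]
    rw [withDensity_apply _ hZ1]
    rw [setLIntegral_congr_fun hZ1 (fun x hx => hx)]
    simp
  have hsZ2 : π.snd (ρ2 ⁻¹' {0}) = 0 := by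
    nth_rewrite 1 [← Measure.withDensity_rnDeriv_eq _ _ hsnd]
    rw [withDensity_apply _ hZ2]
    rw [setLIntegral_congr_fun hZ2 (fun x hx => hx)]
    simp
  refine Measure.AbsolutelyContinuous.mk fun A hA h0 => ?_
  have hsecs : ∀ᵐ x ∂π.fst, π.snd (Prod.mk x ⁻¹' A) = 0 := by
    rw [Measure.prod_apply hA] at h0
    exact (lintegral_eq_zero_iff (measurable_measure_prodMk_left hA)).mp h0
  have hT : ∀ᵐ x ∂ν1, ρ1 x ≠ 0 → π.snd (Prod.mk x ⁻¹' A) = 0 := by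
    set T := {x | π.snd (Prod.mk x ⁻¹' A) ≠ 0} with hTdef
    have hTm : MeasurableSet T :=
      ((measurable_measure_prodMk_left hA) (measurableSet_singleton 0)).compl
    have hμ1T : π.fst T = 0 := by
      rw [ae_iff] at hsecs
      exact hsecs
    have hint0 : ∫⁻ x in T, ρ1 x ∂ν1 = 0 := by
      rw [← withDensity_apply _ hTm, Measure.withDensity_rnDeriv_eq _ _ hfst]
      exact hμ1T
    have hz := (lintegral_eq_zero_iff hm1).mp hint0
    have hz' := (ae_restrict_iff' hTm).mp hz
    filter_upwards [hz'] with x hx hρ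
    by_contra hxx
    exact hρ (hx hxx)
  have key : (ν1.prod ν2) (A ∩ ((ρ1 ⁻¹' {0})ᶜ ×ˢ (ρ2 ⁻¹' {0})ᶜ)) = 0 := by
    have hmeas : MeasurableSet (A ∩ ((ρ1 ⁻¹' {0})ᶜ ×ˢ (ρ2 ⁻¹' {0})ᶜ)) :=
      hA.inter (hZ1.compl.prod hZ2.compl)
    rw [Measure.prod_apply hmeas]
    have hae : ∀ᵐ x ∂ν1, ν2 (Prod.mk x ⁻¹' (A ∩ ((ρ1 ⁻¹' {0})ᶜ ×ˢ (ρ2 ⁻¹' {0})ᶜ))) = 0 := by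
      filter_upwards [hT] with x hx
      by_cases hx1 : ρ1 x = 0
      · have : Prod.mk x ⁻¹' (A ∩ ((ρ1 ⁻¹' {0})ᶜ ×ˢ (ρ2 ⁻¹' {0})ᶜ)) = ∅ := by
          ext y; simp [hx1]
        rw [this]; simp
      · have hsec := hx hx1
        have hsub : Prod.mk x ⁻¹' (A ∩ ((ρ1 ⁻¹' {0})ᶜ ×ˢ (ρ2 ⁻¹' {0})ᶜ))
            ⊆ (Prod.mk x ⁻¹' A) ∩ (ρ2 ⁻¹' {0})ᶜ := by
          intro y hy
          simp only [Set.mem_preimage, Set.mem_inter_iff, Set.mem_prod, Set.mem_compl_iff,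
            Set.mem_singleton_iff] at hy ⊢
          exact ⟨hy.1, hy.2.2⟩
        refine measure_mono_null hsub ?_
        have h2' : ∫⁻ y in Prod.mk x ⁻¹' A, ρ2 y ∂ν2 = 0 := by
          rw [← withDensity_apply _ (measurable_prodMk_left hA),
            Measure.withDensity_rnDeriv_eq _ _ hsnd]
          exact hsec
        have hz2 := (ae_restrict_iff' (measurable_prodMk_left hA)).mp
          ((lintegral_eq_zero_iff hm2).mp h2')
        rw [ae_iff] at hz2
        refine measure_mono_null ?_ hz2
        intro y hy
        simp only [Set.mem_inter_iff, Set.mem_preimage, Set.mem_compl_iff,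
          Set.mem_singleton_iff] at hy
        simp only [Set.mem_setOf_eq]
        push_neg
        exact ⟨hy.1, hy.2⟩
    rw [lintegral_congr_ae (hae.mono fun x hx => hx)]
    simp
  have hπ1 : π ((ρ1 ⁻¹' {0}) ×ˢ (Set.univ : Set Y)) = 0 := by
    rw [Set.prod_univ, ← Measure.fst_apply hZ1]
    exact hfZ1
  have hπ2 : π ((Set.univ : Set X) ×ˢ (ρ2 ⁻¹' {0})) = 0 := by
    rw [Set.univ_prod, ← Measure.snd_apply hZ2]
    exact hsZ2
  have hcover : A ⊆ (A ∩ ((ρ1 ⁻¹' {0})ᶜ ×ˢ (ρ2 ⁻¹' {0})ᶜ))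
      ∪ ((ρ1 ⁻¹' {0}) ×ˢ (Set.univ : Set Y) ∪ (Set.univ : Set X) ×ˢ (ρ2 ⁻¹' {0})) := by
    intro z hz
    by_cases h1 : ρ1 z.1 = 0
    · right; left; exact ⟨h1, trivial⟩
    · by_cases h2 : ρ2 z.2 = 0
      · right; right; exact ⟨trivial, h2⟩
      · left; exact ⟨hz, h1, h2⟩
  refine le_antisymm ?_ zero_le
  calc π A ≤ π ((A ∩ ((ρ1 ⁻¹' {0})ᶜ ×ˢ (ρ2 ⁻¹' {0})ᶜ))
      ∪ ((ρ1 ⁻¹' {0}) ×ˢ (Set.univ : Set Y) ∪ (Set.univ : Set X) ×ˢ (ρ2 ⁻¹' {0}))) :=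
        measure_mono hcover
    _ ≤ π (A ∩ ((ρ1 ⁻¹' {0})ᶜ ×ˢ (ρ2 ⁻¹' {0})ᶜ))
        + (π ((ρ1 ⁻¹' {0}) ×ˢ (Set.univ : Set Y)) + π ((Set.univ : Set X) ×ˢ (ρ2 ⁻¹' {0}))) :=
        le_trans (measure_union_le _ _) (add_le_add_right (measure_union_le _ _) _)
    _ = 0 := by rw [h key, hπ1, hπ2]; simp

end ProdLemmas

section StepMain

variable {X Y : Type*} [MeasurableSpace X] [MeasurableSpace Y]

lemma mystep_main {P R : Measure (X × Y)} [IsProbabilityMeasure P] [IsProbabilityMeasure R]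
    {c : ℝ} (hc : 0 < c) (hc1 : c ≤ 1) (hle : ENNReal.ofReal c • R ≤ P)
    (hPM : P ≪ P.fst.prod P.snd) (hPint : Integrable (llr P (P.fst.prod P.snd)) P) :
    R ≪ R.fst.prod R.snd ∧ Integrable (llr R (R.fst.prod R.snd)) R ∧
    Integrable (llr P (P.fst.prod P.snd)) R ∧
    (∫ z, llr P (P.fst.prod P.snd) z ∂ R =
      ∫ z, llr R (R.fst.prod R.snd) z ∂ R + ∫ x, llr R.fst P.fst x ∂ R.fst
        + ∫ y, llr R.snd P.snd y ∂ R.snd - ∫ z, llr R P z ∂ R) ∧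
    0 ≤ ∫ x, llr R.fst P.fst x ∂ R.fst ∧ 0 ≤ ∫ y, llr R.snd P.snd y ∂ R.snd ∧
    ∫ z, llr R P z ∂ R ≤ Real.log c⁻¹ := by
  have hc0 : (ENNReal.ofReal c) ≠ 0 := by simp [ENNReal.ofReal_eq_zero, not_le, hc]
  have hRP : R ≪ P := myac_of_smul_le hc0 hle
  have hfst_le : ENNReal.ofReal c • R.fst ≤ P.fst := by
    have h := Measure.map_mono hle measurable_fst
    rwa [Measure.map_smul] at h
  have hsnd_le : ENNReal.ofReal c • R.snd ≤ P.snd := by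
    have h := Measure.map_mono hle measurable_snd
    rwa [Measure.map_smul] at h
  have hRPfst : R.fst ≪ P.fst := myac_of_smul_le hc0 hfst_le
  have hRPsnd : R.snd ≪ P.snd := myac_of_smul_le hc0 hsnd_le
  have hMRM : R.fst.prod R.snd ≪ P.fst.prod P.snd := hRPfst.prod hRPsnd
  have hRM : R ≪ P.fst.prod P.snd := hRP.trans hPM
  have hRMR : R ≪ R.fst.prod R.snd := myac_prod_marginals hRM
  have hRle : R ≤ (ENNReal.ofReal c)⁻¹ • P := myle_inv_smul hc0 ENNReal.ofReal_ne_top hle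
  have hPllrR : Integrable (llr P (P.fst.prod P.snd)) R :=
    (hPint.smul_measure (by simp [hc0])).mono_measure hRle
  have hRPbd := myllr_le_of_smul_le hc hc1 hle
  have hRPint : Integrable (llr R P) R := myintegrable_llr_of_ae_bound hRP hRPbd
  have hRPival : ∫ z, llr R P z ∂ R ≤ Real.log c⁻¹ := by
    calc ∫ z, llr R P z ∂ R ≤ ∫ _z, Real.log c⁻¹ ∂ R :=
          integral_mono_ae hRPint (integrable_const _) hRPbd
      _ = Real.log c⁻¹ := by simp
  have hfstbd := myllr_le_of_smul_le hc hc1 hfst_le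
  have hsndbd := myllr_le_of_smul_le hc hc1 hsnd_le
  have hfstint : Integrable (llr R.fst P.fst) R.fst := myintegrable_llr_of_ae_bound hRPfst hfstbd
  have hsndint : Integrable (llr R.snd P.snd) R.snd := myintegrable_llr_of_ae_bound hRPsnd hsndbd
  have hfstint' : Integrable (fun z : X × Y => llr R.fst P.fst z.1) R := by
    have : Integrable (llr R.fst P.fst) (R.map Prod.fst) := hfstint
    exact (integrable_map_measure (stronglyMeasurable_llr _ _).aestronglyMeasurable
      measurable_fst.aemeasurable).mp this
  have hsndint' : Integrable (fun z : X × Y => llr R.snd P.snd z.2) R := by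
    have : Integrable (llr R.snd P.snd) (R.map Prod.snd) := hsndint
    exact (integrable_map_measure (stronglyMeasurable_llr _ _).aestronglyMeasurable
      measurable_snd.aemeasurable).mp this
  -- the key a.e. identity
  have hchain1 : llr R (P.fst.prod P.snd) =ᵐ[R] fun z => llr R P z + llr P (P.fst.prod P.snd) z :=
    myllr_add_llr hRP hPM
  have hchain2 : llr R (P.fst.prod P.snd)
      =ᵐ[R] fun z => llr R (R.fst.prod R.snd) z + llr (R.fst.prod R.snd) (P.fst.prod P.snd) z :=
    myllr_add_llr hRMR hMRM
  have hprodR := hRM.ae_le (myrnDeriv_prod hRPfst hRPsnd)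
  have hfstpos : ∀ᵐ z ∂ R, 0 < R.fst.rnDeriv P.fst z.1 := by
    have h := Measure.rnDeriv_pos hRPfst
    exact ae_of_ae_map measurable_fst.aemeasurable h
  have hfstlt : ∀ᵐ z ∂ R, R.fst.rnDeriv P.fst z.1 < ⊤ := by
    have h := hRPfst.ae_le (Measure.rnDeriv_lt_top R.fst P.fst)
    exact ae_of_ae_map measurable_fst.aemeasurable h
  have hsndpos : ∀ᵐ z ∂ R, 0 < R.snd.rnDeriv P.snd z.2 := by
    have h := Measure.rnDeriv_pos hRPsnd
    exact ae_of_ae_map measurable_snd.aemeasurable h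
  have hsndlt : ∀ᵐ z ∂ R, R.snd.rnDeriv P.snd z.2 < ⊤ := by
    have h := hRPsnd.ae_le (Measure.rnDeriv_lt_top R.snd P.snd)
    exact ae_of_ae_map measurable_snd.aemeasurable h
  have hMRMsplit : llr (R.fst.prod R.snd) (P.fst.prod P.snd)
      =ᵐ[R] fun z => llr R.fst P.fst z.1 + llr R.snd P.snd z.2 := by
    filter_upwards [hprodR, hfstpos, hfstlt, hsndpos, hsndlt] with z h1 h2 h3 h4 h5
    have e : llr (R.fst.prod R.snd) (P.fst.prod P.snd) z
        = Real.log (((R.fst.prod R.snd).rnDeriv (P.fst.prod P.snd) z).toReal) := rfl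
    rw [e, h1, ENNReal.toReal_mul,
      Real.log_mul (ENNReal.toReal_pos h2.ne' h3.ne).ne' (ENNReal.toReal_pos h4.ne' h5.ne).ne']
    rfl
  have hkey : llr P (P.fst.prod P.snd) =ᵐ[R] fun z => llr R (R.fst.prod R.snd) z
      + llr R.fst P.fst z.1 + llr R.snd P.snd z.2 - llr R P z := by
    filter_upwards [hchain1, hchain2, hMRMsplit] with z e1 e2 e3
    rw [e3] at e2
    rw [e2] at e1
    linarith
  have hRMRint : Integrable (llr R (R.fst.prod R.snd)) R := by
    have hg : Integrable (fun z : X × Y => llr P (P.fst.prod P.snd) z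
        - llr R.fst P.fst z.1 - llr R.snd P.snd z.2 + llr R P z) R :=
      ((hPllrR.sub hfstint').sub hsndint').add hRPint
    refine hg.congr ?_
    filter_upwards [hkey] with z hz
    linarith
  have hmargfst : ∫ z, llr R.fst P.fst z.1 ∂ R = ∫ x, llr R.fst P.fst x ∂ R.fst := by
    have : ∫ x, llr R.fst P.fst x ∂(R.map Prod.fst) = ∫ z, llr R.fst P.fst z.1 ∂ R :=
      integral_map measurable_fst.aemeasurable
        (stronglyMeasurable_llr _ _).aestronglyMeasurable
    exact this.symm
  have hmargsnd : ∫ z, llr R.snd P.snd z.2 ∂ R = ∫ y, llr R.snd P.snd y ∂ R.snd := by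
    have : ∫ y, llr R.snd P.snd y ∂(R.map Prod.snd) = ∫ z, llr R.snd P.snd z.2 ∂ R :=
      integral_map measurable_snd.aemeasurable
        (stronglyMeasurable_llr _ _).aestronglyMeasurable
    exact this.symm
  have hIeq : ∫ z, llr P (P.fst.prod P.snd) z ∂ R =
      ∫ z, llr R (R.fst.prod R.snd) z ∂ R + ∫ x, llr R.fst P.fst x ∂ R.fst
        + ∫ y, llr R.snd P.snd y ∂ R.snd - ∫ z, llr R P z ∂ R := by
    have hintsum2 : Integrable (fun z : X × Y => llr R (R.fst.prod R.snd) z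
        + llr R.fst P.fst z.1) R := hRMRint.add hfstint'
    have hintsum3 : Integrable (fun z : X × Y => llr R (R.fst.prod R.snd) z
        + llr R.fst P.fst z.1 + llr R.snd P.snd z.2) R := hintsum2.add hsndint'
    rw [integral_congr_ae hkey]
    rw [integral_sub hintsum3 hRPint, integral_add hintsum2 hsndint',
      integral_add hRMRint hfstint', hmargfst, hmargsnd]
  have hfstnn : 0 ≤ ∫ x, llr R.fst P.fst x ∂ R.fst := myintegral_llr_nonneg hRPfst hfstint
  have hsndnn : 0 ≤ ∫ y, llr R.snd P.snd y ∂ R.snd := myintegral_llr_nonneg hRPsnd hsndint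
  exact ⟨hRMR, hRMRint, hPllrR, hIeq, hfstnn, hsndnn, hRPival⟩

end StepMain

section PiLemmas

variable {ι : Type*} [Fintype ι] [DecidableEq ι] {𝒳 : Type*} [MeasurableSpace 𝒳]

lemma mylintegral_pi_prod [Nonempty 𝒳] (μ : ι → Measure 𝒳) [∀ i, SigmaFinite (μ i)]
    (F : ι → 𝒳 → ℝ≥0∞) (hF : ∀ i, Measurable (F i)) :
    ∫⁻ x, ∏ i, F i (x i) ∂Measure.pi μ = ∏ i, ∫⁻ t, F i t ∂μ i := by
  have hmeas : Measurable (fun y : ι → 𝒳 => ∏ i, F i (y i)) :=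
    Finset.measurable_prod _ fun i _ => (hF i).comp (measurable_pi_apply i)
  have main : ∀ s : Finset ι, ∀ x : ι → 𝒳,
      (∫⋯∫⁻_s, (fun y => ∏ i, F i (y i)) ∂μ) x
        = (∏ i ∈ s, ∫⁻ t, F i t ∂μ i) * ∏ i ∈ sᶜ, F i (x i) := by
    intro s
    induction s using Finset.induction_on with
    | empty => intro x; simp
    | @insert i s hi ih =>
      intro x
      rw [lmarginal_insert _ hmeas hi]
      have hsplit : ∀ t, ∏ j ∈ sᶜ, F j (Function.update x i t j)
          = F i t * ∏ j ∈ (insert i s)ᶜ, F j (x j) := by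
        intro t
        have hsc : sᶜ = insert i ((insert i s)ᶜ) := by
          ext j
          simp only [Finset.mem_compl, Finset.mem_insert]
          by_cases hj : j = i
          · subst hj; simp [hi]
          · simp [hj]
        rw [hsc, Finset.prod_insert (by simp), Function.update_self]
        congr 1
        refine Finset.prod_congr rfl fun j hj => ?_
        rw [Function.update_of_ne]
        intro hji
        rw [hji] at hj
        simp at hj
      simp_rw [ih, hsplit]
      rw [lintegral_const_mul _ (by exact (hF i).mul_const _)]
      rw [lintegral_mul_const _ (hF i)]
      rw [Finset.prod_insert hi]
      ring
  obtain ⟨x0⟩ : Nonempty (ι → 𝒳) := ⟨fun _ => Classical.arbitrary 𝒳⟩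
  rw [lintegral_eq_lmarginal_univ x0, main Finset.univ x0]
  simp

variable {k : ℕ} [NeZero k]

lemma mypi_map_eval {α : Fin k → Measure 𝒳} (hα : ∀ i, IsProbabilityMeasure (α i))
    (i0 : Fin k) : (Measure.pi α).map (Function.eval i0) = α i0 := by
  haveI := hα
  ext s hs
  rw [Measure.map_apply (measurable_pi_apply i0) hs, Set.eval_preimage, Measure.pi_pi]
  have hps := Fintype.prod_eq_single
    (f := fun i => (α i) (Function.update (fun _ => Set.univ) i0 s i)) i0
    (fun j hj => by
      show (α j) (Function.update (fun _ => Set.univ) i0 s j) = 1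
      rw [Function.update_of_ne hj]; exact measure_univ)
  rw [hps]
  show (α i0) (Function.update (fun _ => Set.univ) i0 s i0) = (α i0) s
  rw [Function.update_self]

lemma myprod_update_meas {α : Fin k → Measure 𝒳} {i0 : Fin k} {β : Measure 𝒳}
    (s : Fin k → Set 𝒳) :
    ∏ i, (Function.update α i0 β i) (s i)
      = β (s i0) * ∏ i ∈ Finset.univ.erase i0, α i (s i) := by
  have h : (fun i => (Function.update α i0 β i) (s i))
      = Function.update (fun i => α i (s i)) i0 (β (s i0)) := by
    funext i
    by_cases hi : i = i0
    · subst hi; rw [Function.update_self, Function.update_self]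
    · rw [Function.update_of_ne hi, Function.update_of_ne hi]
  rw [h, Finset.prod_update_of_mem (Finset.mem_univ i0)]
  rw [Finset.sdiff_singleton_eq_erase]

lemma myprod_self_meas {α : Fin k → Measure 𝒳} {i0 : Fin k} (s : Fin k → Set 𝒳) :
    ∏ i, α i (s i) = α i0 (s i0) * ∏ i ∈ Finset.univ.erase i0, α i (s i) :=
  (Finset.mul_prod_erase Finset.univ _ (Finset.mem_univ i0)).symm

lemma mypi_mix {α : Fin k → Measure 𝒳} (hα : ∀ i, IsProbabilityMeasure (α i)) {i0 : Fin k}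
    {a b : ℝ≥0∞} {β γ : Measure 𝒳} [IsProbabilityMeasure β] [IsProbabilityMeasure γ]
    (hmix : α i0 = a • β + b • γ) :
    Measure.pi α = a • Measure.pi (Function.update α i0 β)
      + b • Measure.pi (Function.update α i0 γ) := by
  haveI := hα
  haveI h1 : ∀ i, SigmaFinite (Function.update α i0 β i) := fun i => by
    by_cases hi : i = i0
    · subst hi; rw [Function.update_self]; infer_instance
    · rw [Function.update_of_ne hi]; infer_instance
  haveI h2 : ∀ i, SigmaFinite (Function.update α i0 γ i) := fun i => by
    by_cases hi : i = i0
    · subst hi; rw [Function.update_self]; infer_instance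
    · rw [Function.update_of_ne hi]; infer_instance
  refine Measure.pi_eq fun s hs => ?_
  rw [Measure.add_apply, Measure.smul_apply, Measure.smul_apply, Measure.pi_pi, Measure.pi_pi,
    myprod_update_meas, myprod_update_meas, myprod_self_meas (i0 := i0), hmix,
    Measure.add_apply, Measure.smul_apply, Measure.smul_apply]
  simp only [smul_eq_mul]
  ring

lemma mypi_withDensity0 {α : Fin k → Measure 𝒳} [Nonempty 𝒳]
    (hα : ∀ i, IsProbabilityMeasure (α i))
    {g : 𝒳 → ℝ≥0∞} (hg : Measurable g) {β : Measure 𝒳} [IsProbabilityMeasure β]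
    (hβ : β = (α 0).withDensity g) :
    Measure.pi (Function.update α 0 β) = (Measure.pi α).withDensity (fun x => g (x 0)) := by
  haveI := hα
  haveI h1 : ∀ i, SigmaFinite (Function.update α 0 β i) := fun i => by
    by_cases hi : i = 0
    · subst hi; rw [Function.update_self]; infer_instance
    · rw [Function.update_of_ne hi]; infer_instance
  refine Measure.pi_eq fun s hs => ?_
  rw [withDensity_apply _ (MeasurableSet.univ_pi hs)]
  have hind : ∀ x : Fin k → 𝒳, (Set.univ.pi s).indicator (fun x => g (x 0)) x
      = ∏ i, (s i).indicator (fun u => if i = 0 then g u else 1) (x i) := by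
    intro x
    by_cases hx : x ∈ Set.univ.pi s
    · rw [Set.indicator_of_mem hx]
      have hx' : ∀ i, x i ∈ s i := fun i => hx i (Set.mem_univ i)
      calc g (x 0) = (s 0).indicator (fun u => if (0 : Fin k) = 0 then g u else 1) (x 0) := by
            rw [Set.indicator_of_mem (hx' 0)]; simp
        _ = ∏ i, (s i).indicator (fun u => if i = 0 then g u else 1) (x i) := by
            have hps := Fintype.prod_eq_single
              (f := fun i => (s i).indicator (fun u => if i = 0 then g u else 1) (x i))
              (0 : Fin k) (fun j hj => by
                show (s j).indicator (fun u => if j = 0 then g u else 1) (x j) = 1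
                rw [Set.indicator_of_mem (hx' j)]
                simp [hj])
            rw [hps]
    · rw [Set.indicator_of_notMem hx]
      simp only [Set.mem_pi, Set.mem_univ, forall_true_left, not_forall] at hx
      obtain ⟨j, hj⟩ := hx
      refine (Finset.prod_eq_zero (Finset.mem_univ j) ?_).symm
      rw [Set.indicator_of_notMem hj]
  rw [← lintegral_indicator (MeasurableSet.univ_pi hs), lintegral_congr hind]
  have hFmeas : ∀ i : Fin k, Measurable ((s i).indicator
      (fun u => if i = 0 then g u else (1 : ℝ≥0∞))) := by
    intro i
    by_cases hi : i = 0
    · subst hi; simpa using (Measurable.indicator hg (hs 0))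
    · simp only [hi, if_false]
      exact Measurable.indicator measurable_const (hs i)
  rw [mylintegral_pi_prod α _ hFmeas]
  rw [myprod_update_meas]
  have h0 : ∫⁻ t, (s 0).indicator (fun u => if (0 : Fin k) = 0 then g u else 1) t ∂α 0
      = β (s 0) := by
    simp only [if_true]
    rw [lintegral_indicator (hs 0), hβ, withDensity_apply _ (hs 0)]
  calc ∏ i, ∫⁻ t, (s i).indicator (fun u => if i = 0 then g u else 1) t ∂α i
      = (∫⁻ t, (s 0).indicator (fun u => if (0 : Fin k) = 0 then g u else 1) t ∂α 0)
        * ∏ i ∈ Finset.univ.erase 0,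
            ∫⁻ t, (s i).indicator (fun u => if i = 0 then g u else 1) t ∂α i :=
        (Finset.mul_prod_erase Finset.univ _ (Finset.mem_univ 0)).symm
    _ = β (s 0) * ∏ i ∈ Finset.univ.erase 0, α i (s i) := by
        rw [h0]
        congr 1
        refine Finset.prod_congr rfl fun i hi => ?_
        have hi0 : i ≠ 0 := Finset.ne_of_mem_erase hi
        simp only [hi0, if_false]
        rw [lintegral_indicator (hs i)]
        simp
  
end PiLemmas

section KernelLemmas

variable {A B : Type*} [MeasurableSpace A] [MeasurableSpace B]

lemma mymap_withDensity_comp {m : Measure A} {F : A → B} (hF : Measurable F)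
    {φ : B → ℝ≥0∞} (hφ : Measurable φ) :
    (m.withDensity (fun a => φ (F a))).map F = (m.map F).withDensity φ := by
  ext s hs
  rw [Measure.map_apply hF hs, withDensity_apply _ (hF hs), withDensity_apply _ hs,
    setLIntegral_map hs hφ hF]

lemma mycompProd_withDensity {m : Measure A} [SFinite m] (κ : Kernel A B) [IsSFiniteKernel κ]
    {φ : A → ℝ≥0∞} (hφ : Measurable φ) [SFinite (m.withDensity φ)] :
    (m.withDensity φ) ⊗ₘ κ = (m ⊗ₘ κ).withDensity (fun p => φ p.1) := by
  ext s hs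
  rw [Measure.compProd_apply hs, withDensity_apply _ hs,
    lintegral_withDensity_eq_lintegral_mul _ hφ (Kernel.measurable_kernel_prodMk_left hs)]
  have : ∫⁻ p in s, φ p.1 ∂(m ⊗ₘ κ) = ∫⁻ p, s.indicator (fun p : A × B => φ p.1) p ∂(m ⊗ₘ κ) :=
    (lintegral_indicator hs _).symm
  have hmeas : Measurable (s.indicator (fun p : A × B => φ p.1)) :=
    (hφ.comp measurable_fst).indicator hs
  rw [this, Measure.lintegral_compProd hmeas]
  refine lintegral_congr fun x => ?_
  have : ∀ y, s.indicator (fun p : A × B => φ p.1) (x, y)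
      = φ x * (Prod.mk x ⁻¹' s).indicator (fun _ => 1) y := by
    intro y
    by_cases hxy : (x, y) ∈ s
    · rw [Set.indicator_of_mem hxy, Set.indicator_of_mem (by exact hxy)]
      simp
    · rw [Set.indicator_of_notMem hxy, Set.indicator_of_notMem (by exact hxy)]
      simp
  rw [lintegral_congr this, lintegral_const_mul _ (measurable_const.indicator
    (measurable_prodMk_left hs))]
  rw [lintegral_indicator (measurable_prodMk_left hs)]
  simp [Pi.mul_apply]

end KernelLemmas

section ChannelFacts

variable {𝒳 𝒴 : Type*} [MeasurableSpace 𝒳] [MeasurableSpace 𝒴] {k : ℕ} [NeZero k]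

/-- The joint law of `(X₁, Y₁)`. -/
noncomputable def Jm (K : Kernel (Fin k → 𝒳) 𝒴) (α : Fin k → Measure 𝒳) : Measure (𝒳 × 𝒴) :=
  ((Measure.pi α) ⊗ₘ K).map (fun p => (p.1 0, p.2))

lemma measurable_projmap : Measurable (fun p : (Fin k → 𝒳) × 𝒴 => (p.1 0, p.2)) :=
  ((measurable_pi_apply 0).comp measurable_fst).prodMk measurable_snd

variable (K : Kernel (Fin k → 𝒳) 𝒴) [IsMarkovKernel K]

lemma Jm_prob {α : Fin k → Measure 𝒳} (hα : ∀ i, IsProbabilityMeasure (α i)) :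
    IsProbabilityMeasure (Jm K α) := by
  haveI := hα
  haveI : IsProbabilityMeasure ((Measure.pi α) ⊗ₘ K) := by infer_instance
  exact Measure.isProbabilityMeasure_map measurable_projmap.aemeasurable

lemma Jm_fst {α : Fin k → Measure 𝒳} (hα : ∀ i, IsProbabilityMeasure (α i)) :
    (Jm K α).fst = α 0 := by
  haveI := hα
  have h1 : (Jm K α).fst = ((Measure.pi α) ⊗ₘ K).map
      (Prod.fst ∘ (fun p : (Fin k → 𝒳) × 𝒴 => (p.1 0, p.2))) := by
    rw [Jm, Measure.fst, Measure.map_map measurable_fst measurable_projmap]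
  have h2 : (Prod.fst ∘ (fun p : (Fin k → 𝒳) × 𝒴 => (p.1 0, p.2)))
      = (Function.eval 0) ∘ (Prod.fst : (Fin k → 𝒳) × 𝒴 → (Fin k → 𝒳)) := rfl
  rw [h1, h2, ← Measure.map_map (measurable_pi_apply 0) measurable_fst]
  have h3 : ((Measure.pi α) ⊗ₘ K).map Prod.fst = Measure.pi α := Measure.fst_compProd _ _
  rw [h3, mypi_map_eval hα 0]

lemma Jm_mix {α : Fin k → Measure 𝒳} (hα : ∀ i, IsProbabilityMeasure (α i)) {i0 : Fin k}
    {a b : ℝ≥0∞} (ha : a ≠ ∞) (hb : b ≠ ∞) {β γ : Measure 𝒳}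
    [IsProbabilityMeasure β] [IsProbabilityMeasure γ]
    (hmix : α i0 = a • β + b • γ) :
    Jm K α = a • Jm K (Function.update α i0 β) + b • Jm K (Function.update α i0 γ) := by
  haveI := hα
  haveI hupd1 : ∀ i, IsProbabilityMeasure (Function.update α i0 β i) := fun i => by
    by_cases hi : i = i0
    · subst hi; rw [Function.update_self]; infer_instance
    · rw [Function.update_of_ne hi]; infer_instance
  haveI hupd2 : ∀ i, IsProbabilityMeasure (Function.update α i0 γ i) := fun i => by
    by_cases hi : i = i0
    · subst hi; rw [Function.update_self]; infer_instance
    · rw [Function.update_of_ne hi]; infer_instance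
  rw [Jm, mypi_mix hα hmix]
  haveI : SFinite (a • Measure.pi (Function.update α i0 β)) := by infer_instance
  haveI : SFinite (b • Measure.pi (Function.update α i0 γ)) := by infer_instance
  rw [Measure.compProd_add_left, Measure.compProd_smul_left, Measure.compProd_smul_left,
    Measure.map_add _ _ measurable_projmap, Measure.map_smul, Measure.map_smul]
  rfl

set_option maxHeartbeats 1000000 in
lemma Jm_withDensity [Nonempty 𝒳] {α : Fin k → Measure 𝒳}
    (hα : ∀ i, IsProbabilityMeasure (α i))
    {g : 𝒳 → ℝ≥0∞} (hg : Measurable g) {β : Measure 𝒳} [IsProbabilityMeasure β]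
    (hβ : β = (α 0).withDensity g) :
    Jm K (Function.update α 0 β) = (Jm K α).withDensity (fun z => g z.1) := by
  haveI := hα
  rw [Jm, Jm, mypi_withDensity0 hα hg hβ]
  haveI : SFinite ((Measure.pi α).withDensity (fun x => g (x 0))) := by
    rw [← mypi_withDensity0 hα hg hβ]
    haveI : ∀ i, IsProbabilityMeasure (Function.update α 0 β i) := fun i => by
      by_cases hi : i = 0
      · subst hi; rw [Function.update_self]; infer_instance
      · rw [Function.update_of_ne hi]; infer_instance
    infer_instance
  have hgm : Measurable (fun x : Fin k → 𝒳 => g (x 0)) := hg.comp (measurable_pi_apply 0)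
  rw [mycompProd_withDensity K hgm]
  exact mymap_withDensity_comp measurable_projmap (hg.comp measurable_fst)

end ChannelFacts

section Assembly

variable {𝒳 𝒴 : Type*} [MeasurableSpace 𝒳] [MeasurableSpace 𝒴]

lemma myllr_withDensity_fst {P R : Measure (𝒳 × 𝒴)} [IsProbabilityMeasure P]
    [IsProbabilityMeasure R] {g : 𝒳 → ℝ≥0∞} (hg : Measurable g)
    (hR : R = P.withDensity (fun z => g z.1)) (hRP : R ≪ P) :
    ∫ z, llr R P z ∂ R = ∫ x, llr R.fst P.fst x ∂ R.fst := by
  have hRfst : R.fst = P.fst.withDensity g := by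
    rw [hR]
    exact mymap_withDensity_comp measurable_fst hg
  have h1 : R.rnDeriv P =ᵐ[P] fun z => g z.1 := by
    have h : (P.withDensity fun z => g z.1).rnDeriv P =ᵐ[P] fun z => g z.1 :=
      Measure.rnDeriv_withDensity P (hg.comp measurable_fst)
    rw [← hR] at h
    exact h
  have h2 : R.fst.rnDeriv P.fst =ᵐ[P.fst] g := by
    have h := Measure.rnDeriv_withDensity P.fst hg
    rw [← hRfst] at h
    exact h
  have h2' : ∀ᵐ z ∂P, R.fst.rnDeriv P.fst z.1 = g z.1 :=
    ae_of_ae_map (measurable_fst.aemeasurable (μ := P)) h2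
  have hkey : llr R P =ᵐ[R] fun z => llr R.fst P.fst z.1 := by
    filter_upwards [hRP.ae_le h1, hRP.ae_le h2'] with z e1 e2
    have e3 : llr R P z = Real.log ((R.rnDeriv P z).toReal) := rfl
    have e4 : llr R.fst P.fst z.1 = Real.log ((R.fst.rnDeriv P.fst z.1).toReal) := rfl
    rw [e3, e1, e4, e2]
  rw [integral_congr_ae hkey]
  exact (integral_map measurable_fst.aemeasurable
    (stronglyMeasurable_llr _ _).aestronglyMeasurable).symm

lemma myHe_le_binaryEntropy {ε : ℝ} (hε0 : 0 < ε) (hε1 : ε < 1) :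
    (1 - ε) * Real.log (1 - ε)⁻¹ + ε * Real.log ε⁻¹ ≤ binaryEntropy ε := by
  rw [binaryEntropy, Real.log_inv, Real.log_inv]
  simp only [Real.logb]
  have hlog2pos : 0 < Real.log 2 := Real.log_pos (by norm_num)
  have hlog2le : Real.log 2 ≤ 1 := by
    have := Real.log_le_sub_one_of_pos (by norm_num : (0:ℝ) < 2)
    linarith
  have hinv : 1 ≤ (Real.log 2)⁻¹ := by
    rw [le_inv_comm₀ one_pos hlog2pos, inv_one]; exact hlog2le
  have ha : 0 ≤ -Real.log ε := by
    have := Real.log_nonpos (x := ε) hε0.le hε1.le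
    linarith
  have hb : 0 ≤ -Real.log (1 - ε) := by
    have := Real.log_nonpos (x := 1 - ε) (by linarith) (by linarith)
    linarith
  have h1 : ε * -Real.log ε ≤ ε * -Real.log ε * (Real.log 2)⁻¹ := by
    nlinarith [mul_nonneg hε0.le ha]
  have h2 : (1 - ε) * -Real.log (1 - ε) ≤ (1 - ε) * -Real.log (1 - ε) * (Real.log 2)⁻¹ := by
    nlinarith [mul_nonneg (by linarith : (0:ℝ) ≤ 1 - ε) hb]
  have e1 : -(ε * (Real.log ε / Real.log 2)) = ε * -Real.log ε * (Real.log 2)⁻¹ := by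
    field_simp
  have e2 : (1 - ε) * (Real.log (1 - ε) / Real.log 2)
      = -((1 - ε) * -Real.log (1 - ε) * (Real.log 2)⁻¹) := by
    field_simp
  nlinarith [h1, h2]

lemma chain_bound [Nonempty 𝒳] {k : ℕ} [NeZero k] (K : Kernel (Fin k → 𝒳) 𝒴)
    [IsMarkovKernel K] {ε : ℝ} (hε0 : 0 < ε) (hε1 : ε < 1) {μ' μ'' ν : Fin k → Measure 𝒳}
    (hμ' : ∀ i, IsProbabilityMeasure (μ' i)) (hμ'' : ∀ i, IsProbabilityMeasure (μ'' i))
    (hν : ∀ i, ν i = ENNReal.ofReal (1 - ε) • μ' i + ENNReal.ofReal ε • μ'' i)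
    (hνprob : ∀ i, IsProbabilityMeasure (ν i))
    (hac : Jm K ν ≪ (Jm K ν).fst.prod (Jm K ν).snd)
    (hint : Integrable (llr (Jm K ν) ((Jm K ν).fst.prod (Jm K ν).snd)) (Jm K ν))
    (T : Finset (Fin k)) (hT : (0 : Fin k) ∉ T) :
    Jm K (fun i => if i ∈ T then μ' i else ν i)
        ≪ (Jm K (fun i => if i ∈ T then μ' i else ν i)).fst.prod
            (Jm K (fun i => if i ∈ T then μ' i else ν i)).snd
      ∧ Integrable (llr (Jm K (fun i => if i ∈ T then μ' i else ν i))
            ((Jm K (fun i => if i ∈ T then μ' i else ν i)).fst.prod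
              (Jm K (fun i => if i ∈ T then μ' i else ν i)).snd))
          (Jm K (fun i => if i ∈ T then μ' i else ν i))
      ∧ (1 - ε) ^ T.card
            * (∫ z, llr (Jm K (fun i => if i ∈ T then μ' i else ν i))
                ((Jm K (fun i => if i ∈ T then μ' i else ν i)).fst.prod
                  (Jm K (fun i => if i ∈ T then μ' i else ν i)).snd) z
                ∂(Jm K (fun i => if i ∈ T then μ' i else ν i)))
          - T.card * ((1 - ε) * Real.log (1 - ε)⁻¹ + ε * Real.log ε⁻¹)
        ≤ ∫ z, llr (Jm K ν) ((Jm K ν).fst.prod (Jm K ν).snd) z ∂(Jm K ν) := by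
  classical
  have hHe0 : 0 ≤ (1 - ε) * Real.log (1 - ε)⁻¹ + ε * Real.log ε⁻¹ := by
    have h1 : 0 ≤ Real.log (1 - ε)⁻¹ := Real.log_nonneg (by
      rw [le_inv_comm₀ one_pos (by linarith), inv_one]; linarith)
    have h2 : 0 ≤ Real.log ε⁻¹ := Real.log_nonneg (by
      rw [le_inv_comm₀ one_pos hε0, inv_one]; linarith)
    nlinarith
  revert hT
  induction T using Finset.induction_on with
  | empty =>
    intro _
    have he : (fun i => if i ∈ (∅ : Finset (Fin k)) then μ' i else ν i) = ν := by
      funext i; simp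
    rw [he]
    simp only [Finset.card_empty, pow_zero, one_mul, Nat.cast_zero, zero_mul, sub_zero]
    exact ⟨hac, hint, le_refl _⟩
  | @insert i T hiT ih =>
    intro h0
    have hi0 : i ≠ 0 := fun h => h0 (by rw [h]; exact Finset.mem_insert_self _ _)
    have h0T : (0 : Fin k) ∉ T := fun h => h0 (Finset.mem_insert_of_mem h)
    obtain ⟨hacT, hintT, hineqT⟩ := ih h0T
    set αT : Fin k → Measure 𝒳 := fun j => if j ∈ T then μ' j else ν j with hαT
    have hαTprob : ∀ j, IsProbabilityMeasure (αT j) := fun j => by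
      by_cases h : j ∈ T
      · simpa [hαT, h] using hμ' j
      · simpa [hαT, h] using hνprob j
    haveI hPprob : IsProbabilityMeasure (Jm K αT) := Jm_prob K hαTprob
    have hmix : αT i = ENNReal.ofReal (1 - ε) • μ' i + ENNReal.ofReal ε • μ'' i := by
      have h1 : αT i = ν i := by rw [hαT]; simp [hiT]
      rw [h1, hν i]
    haveI : IsProbabilityMeasure (μ' i) := hμ' i
    haveI : IsProbabilityMeasure (μ'' i) := hμ'' i
    have hdecomp := Jm_mix K hαTprob ENNReal.ofReal_ne_top ENNReal.ofReal_ne_top hmix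
    have hupdβ : Function.update αT i (μ' i)
        = fun j => if j ∈ insert i T then μ' j else ν j := by
      funext j
      by_cases hj : j = i
      · subst hj; rw [Function.update_self]; simp
      · rw [Function.update_of_ne hj, hαT]
        simp only [Finset.mem_insert, hj, false_or]
    haveI hprobβ : IsProbabilityMeasure (Jm K (Function.update αT i (μ' i))) :=
      Jm_prob K (fun j => by
        by_cases hj : j = i
        · subst hj; rw [Function.update_self]; infer_instance
        · rw [Function.update_of_ne hj]; exact hαTprob j)
    haveI hprobγ : IsProbabilityMeasure (Jm K (Function.update αT i (μ'' i))) :=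
      Jm_prob K (fun j => by
        by_cases hj : j = i
        · subst hj; rw [Function.update_self]; infer_instance
        · rw [Function.update_of_ne hj]; exact hαTprob j)
    have hleβ : ENNReal.ofReal (1 - ε) • Jm K (Function.update αT i (μ' i)) ≤ Jm K αT := by
      rw [hdecomp]; intro s; simp only [Measure.add_apply]; exact le_self_add
    have hleγ : ENNReal.ofReal ε • Jm K (Function.update αT i (μ'' i)) ≤ Jm K αT := by
      rw [hdecomp]; intro s; simp only [Measure.add_apply]; exact le_add_self
    obtain ⟨hacβ, hintβ, hPintβ, hidβ, hfβ, hsβ, hdβ⟩ :=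
      mystep_main (by linarith : (0:ℝ) < 1 - ε) (by linarith) hleβ hacT hintT
    obtain ⟨hacγ, hintγ, hPintγ, hidγ, hfγ, hsγ, hdγ⟩ :=
      mystep_main hε0 hε1.le hleγ hacT hintT
    have hsplit : ∫ z, llr (Jm K αT) ((Jm K αT).fst.prod (Jm K αT).snd) z ∂(Jm K αT)
        = (1 - ε) * ∫ z, llr (Jm K αT) ((Jm K αT).fst.prod (Jm K αT).snd) z
              ∂(Jm K (Function.update αT i (μ' i)))
          + ε * ∫ z, llr (Jm K αT) ((Jm K αT).fst.prod (Jm K αT).snd) z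
              ∂(Jm K (Function.update αT i (μ'' i))) := by
      nth_rewrite 1 [hdecomp]
      rw [integral_add_measure (hPintβ.smul_measure ENNReal.ofReal_ne_top)
        (hPintγ.smul_measure ENNReal.ofReal_ne_top),
        integral_smul_measure, integral_smul_measure,
        ENNReal.toReal_ofReal (by linarith), ENNReal.toReal_ofReal hε0.le]
      simp only [smul_eq_mul]
    have hIγ0 : 0 ≤ ∫ z, llr (Jm K (Function.update αT i (μ'' i)))
        ((Jm K (Function.update αT i (μ'' i))).fst.prod
          (Jm K (Function.update αT i (μ'' i))).snd) z
        ∂(Jm K (Function.update αT i (μ'' i))) := myintegral_llr_nonneg hacγ hintγ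
    have hγlb : - Real.log ε⁻¹ ≤ ∫ z, llr (Jm K αT) ((Jm K αT).fst.prod (Jm K αT).snd) z
        ∂(Jm K (Function.update αT i (μ'' i))) := by
      rw [hidγ]; linarith
    have hβlb : (∫ z, llr (Jm K (Function.update αT i (μ' i)))
          ((Jm K (Function.update αT i (μ' i))).fst.prod
            (Jm K (Function.update αT i (μ' i))).snd) z
          ∂(Jm K (Function.update αT i (μ' i)))) - Real.log (1 - ε)⁻¹
        ≤ ∫ z, llr (Jm K αT) ((Jm K αT).fst.prod (Jm K αT).snd) z
          ∂(Jm K (Function.update αT i (μ' i))) := by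
      rw [hidβ]; linarith
    refine ⟨?_, ?_, ?_⟩
    · rw [← hupdβ]; exact hacβ
    · rw [← hupdβ]; exact hintβ
    · rw [← hupdβ, Finset.card_insert_of_notMem hiT]
      push_cast
      rw [pow_succ]
      have hkey2 : (1 - ε) * (∫ z, llr (Jm K (Function.update αT i (μ' i)))
            ((Jm K (Function.update αT i (μ' i))).fst.prod
              (Jm K (Function.update αT i (μ' i))).snd) z
            ∂(Jm K (Function.update αT i (μ' i))))
          - ((1 - ε) * Real.log (1 - ε)⁻¹ + ε * Real.log ε⁻¹)
          ≤ ∫ z, llr (Jm K αT) ((Jm K αT).fst.prod (Jm K αT).snd) z ∂(Jm K αT) := by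
        rw [hsplit]
        nlinarith [mul_le_mul_of_nonneg_left hβlb (by linarith : (0:ℝ) ≤ 1 - ε),
          mul_le_mul_of_nonneg_left hγlb hε0.le]
      have hp0 : (0:ℝ) ≤ (1 - ε) ^ T.card := pow_nonneg (by linarith) _
      have hp1 : (1 - ε) ^ T.card ≤ 1 := pow_le_one₀ (by linarith) (by linarith)
      have hmul := mul_le_mul_of_nonneg_left hkey2 hp0
      have hHemul : (1 - ε) ^ T.card * ((1 - ε) * Real.log (1 - ε)⁻¹ + ε * Real.log ε⁻¹)
          ≤ (1 - ε) * Real.log (1 - ε)⁻¹ + ε * Real.log ε⁻¹ :=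
        mul_le_of_le_one_left hHe0 hp1
      nlinarith [hineqT, hmul, hHemul]

end Assembly

lemma primaryMI_eq_klDiv {𝒳 𝒴 : Type*} [MeasurableSpace 𝒳] [MeasurableSpace 𝒴] {k : ℕ}
    [NeZero k] (K : Kernel (Fin k → 𝒳) 𝒴) (μs : Fin k → Measure 𝒳) :
    primaryMI K μs = klDiv (Jm K μs) ((Jm K μs).fst.prod (Jm K μs).snd) := rfl

set_option maxHeartbeats 2000000 in
/-- Inequalities (15)–(18) in the proof of Theorem 2.  Each user `i` performs time sharing
between `X_i' ~ μ' i` and `X_i'' ~ μ'' i` driven by independent Bernoulli(ε) variables, so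
that the law of the input `X_i` is the mixture `(1 − ε) μ' i + ε μ'' i` and the inputs are
independent.  Then `I(X₁; Y₁) ≥ (1 − ε)^k I(X₁'; Y₁') − (k − 1) H₂(ε)`, where `Y₁` is the
channel output for the time-sharing inputs and `Y₁'` is the output of the primary channel
`K̄'(·|x₁) = ∫⋯∫ K(·|x₁, x₂, …, x_k) dμ₂'(x₂)⋯dμ_k'(x_k)` with input `X₁' ~ μ₁'`. -/
theorem timeSharing_interference_bound
    {n k : ℕ} [NeZero k] {𝒴 : Type*} [MeasurableSpace 𝒴] [StandardBorelSpace 𝒴]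
    (K : Kernel (Fin k → (Fin n → ℝ)) 𝒴) [IsMarkovKernel K]
    (ε : ℝ) (hε0 : 0 < ε) (hε1 : ε ≤ 1)
    (μ' μ'' : Fin k → Measure (Fin n → ℝ))
    (hμ' : ∀ i, IsProbabilityMeasure (μ' i)) (hμ'' : ∀ i, IsProbabilityMeasure (μ'' i))
    (hfin : primaryMI K
      (fun i => ENNReal.ofReal (1 - ε) • μ' i + ENNReal.ofReal ε • μ'' i) ≠ ⊤)
    (hfin' : primaryMI K μ' ≠ ⊤) :
    (1 - ε) ^ k * (primaryMI K μ').toReal - (k - 1 : ℝ) * binaryEntropy ε ≤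
      (primaryMI K
        (fun i => ENNReal.ofReal (1 - ε) • μ' i + ENNReal.ofReal ε • μ'' i)).toReal := by
  classical
  by_cases hεtop : ε = 1
  · subst hεtop
    have h1 : (1 - 1 : ℝ) = 0 := by norm_num
    rw [h1, zero_pow (NeZero.ne k)]
    have hb : binaryEntropy 1 = 0 := by
      rw [binaryEntropy]
      norm_num
    rw [hb]
    simpa using ENNReal.toReal_nonneg
  have hε1' : ε < 1 := lt_of_le_of_ne hε1 hεtop
  haveI := hμ'
  haveI := hμ''
  set ν : Fin k → Measure (Fin n → ℝ) :=
    fun i => ENNReal.ofReal (1 - ε) • μ' i + ENNReal.ofReal ε • μ'' i with hνdef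
  have hν : ∀ i, ν i = ENNReal.ofReal (1 - ε) • μ' i + ENNReal.ofReal ε • μ'' i := fun i => rfl
  have hνprob : ∀ i, IsProbabilityMeasure (ν i) := fun i => by
    rw [hν i]
    constructor
    simp only [Measure.add_apply, Measure.smul_apply, smul_eq_mul, measure_univ, mul_one]
    rw [← ENNReal.ofReal_add (by linarith) hε0.le]
    norm_num
  haveI hJνprob : IsProbabilityMeasure (Jm K ν) := Jm_prob K hνprob
  -- unpack hfin
  have hfin2 : Jm K ν ≪ (Jm K ν).fst.prod (Jm K ν).snd
      ∧ Integrable (llr (Jm K ν) ((Jm K ν).fst.prod (Jm K ν).snd)) (Jm K ν) := by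
    by_contra hc
    apply hfin
    rw [primaryMI_eq_klDiv, klDiv, if_neg hc]
  obtain ⟨hacF, hintF⟩ := hfin2
  -- stage 1 : conditioning on the coordinates ≠ 0
  obtain ⟨hacT, hintT, hineq⟩ := chain_bound K hε0 hε1' hμ' hμ'' hν hνprob hacF hintF
    (Finset.univ.erase 0) (Finset.notMem_erase 0 _)
  set α' : Fin k → Measure (Fin n → ℝ) :=
    fun j => if j ∈ Finset.univ.erase (0 : Fin k) then μ' j else ν j with hα'
  have hα'prob : ∀ j, IsProbabilityMeasure (α' j) := fun j => by
    show IsProbabilityMeasure (if j ∈ Finset.univ.erase (0 : Fin k) then μ' j else ν j)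
    by_cases h : j ∈ Finset.univ.erase (0 : Fin k)
    · rw [if_pos h]; exact hμ' j
    · rw [if_neg h]; exact hνprob j
  haveI hPprob : IsProbabilityMeasure (Jm K α') := Jm_prob K hα'prob
  have hα'0 : α' 0 = ν 0 := by rw [hα']; simp
  have hmix0 : α' 0 = ENNReal.ofReal (1 - ε) • μ' 0 + ENNReal.ofReal ε • μ'' 0 := by
    rw [hα'0, hν]
  haveI : IsProbabilityMeasure (μ' 0) := hμ' 0
  haveI : IsProbabilityMeasure (μ'' 0) := hμ'' 0
  have hdecomp0 := Jm_mix K hα'prob ENNReal.ofReal_ne_top ENNReal.ofReal_ne_top hmix0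
  have hupd' : Function.update α' 0 (μ' 0) = μ' := by
    funext j
    by_cases hj : j = 0
    · subst hj; rw [Function.update_self]
    · rw [Function.update_of_ne hj, hα']
      simp [Finset.mem_erase, hj]
  rw [hupd'] at hdecomp0
  -- a.c. of the components
  have hc1 : ENNReal.ofReal (1 - ε) ≠ 0 := by
    simp [ENNReal.ofReal_eq_zero, not_le]; linarith
  have hc2 : ENNReal.ofReal ε ≠ 0 := by
    simp [ENNReal.ofReal_eq_zero, not_le]; linarith
  have hleμ'0 : ENNReal.ofReal (1 - ε) • μ' 0 ≤ ν 0 := by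
    rw [hν 0]; intro s; simp only [Measure.add_apply]; exact le_self_add
  have hleμ''0 : ENNReal.ofReal ε • μ'' 0 ≤ ν 0 := by
    rw [hν 0]; intro s; simp only [Measure.add_apply]; exact le_add_self
  have hacμ'0 : μ' 0 ≪ ν 0 := myac_of_smul_le hc1 hleμ'0
  have hacμ''0 : μ'' 0 ≪ ν 0 := myac_of_smul_le hc2 hleμ''0
  haveI : IsProbabilityMeasure (ν 0) := hνprob 0
  have hgβ : μ' 0 = (α' 0).withDensity ((μ' 0).rnDeriv (ν 0)) := by
    haveI : (μ' 0).HaveLebesgueDecomposition (ν 0) := Measure.haveLebesgueDecomposition_of_sigmaFinite _ _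
    rw [hα'0]; exact (Measure.withDensity_rnDeriv_eq _ _ hacμ'0).symm
  have hgγ : μ'' 0 = (α' 0).withDensity ((μ'' 0).rnDeriv (ν 0)) := by
    haveI : (μ'' 0).HaveLebesgueDecomposition (ν 0) := Measure.haveLebesgueDecomposition_of_sigmaFinite _ _
    rw [hα'0]; exact (Measure.withDensity_rnDeriv_eq _ _ hacμ''0).symm
  have hwdβ := Jm_withDensity K hα'prob (Measure.measurable_rnDeriv (μ' 0) (ν 0)) hgβ
  have hwdγ := Jm_withDensity K hα'prob (Measure.measurable_rnDeriv (μ'' 0) (ν 0)) hgγ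
  rw [hupd'] at hwdβ
  -- step lemma at coordinate 0
  haveI : IsProbabilityMeasure (Jm K μ') := Jm_prob K hμ'
  haveI hprobγ0 : IsProbabilityMeasure (Jm K (Function.update α' 0 (μ'' 0))) :=
    Jm_prob K (fun j => by
      by_cases hj : j = 0
      · subst hj; rw [Function.update_self]; infer_instance
      · rw [Function.update_of_ne hj]; exact hα'prob j)
  have hleβ : ENNReal.ofReal (1 - ε) • Jm K μ' ≤ Jm K α' := by
    rw [hdecomp0]; intro s; simp only [Measure.add_apply]; exact le_self_add
  have hleγ : ENNReal.ofReal ε • Jm K (Function.update α' 0 (μ'' 0)) ≤ Jm K α' := by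
    rw [hdecomp0]; intro s; simp only [Measure.add_apply]; exact le_add_self
  obtain ⟨hacβ, hintβ, hPintβ, hidβ, hfβ, hsβ, hdβ⟩ :=
    mystep_main (by linarith : (0:ℝ) < 1 - ε) (by linarith) hleβ hacT hintT
  obtain ⟨hacγ, hintγ, hPintγ, hidγ, hfγ, hsγ, hdγ⟩ :=
    mystep_main hε0 hε1'.le hleγ hacT hintT
  -- cancellation of the first-marginal terms
  have hcancelβ : ∫ z, llr (Jm K μ') (Jm K α') z ∂(Jm K μ')
      = ∫ x, llr (Jm K μ').fst (Jm K α').fst x ∂(Jm K μ').fst :=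
    myllr_withDensity_fst (Measure.measurable_rnDeriv (μ' 0) (ν 0)) hwdβ
      (myac_of_smul_le hc1 hleβ)
  have hcancelγ : ∫ z, llr (Jm K (Function.update α' 0 (μ'' 0))) (Jm K α') z
        ∂(Jm K (Function.update α' 0 (μ'' 0)))
      = ∫ x, llr (Jm K (Function.update α' 0 (μ'' 0))).fst (Jm K α').fst x
        ∂(Jm K (Function.update α' 0 (μ'' 0))).fst :=
    myllr_withDensity_fst (Measure.measurable_rnDeriv (μ'' 0) (ν 0)) hwdγ
      (myac_of_smul_le hc2 hleγ)
  -- lower bounds on the two parts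
  have hβge : ∫ z, llr (Jm K μ') ((Jm K μ').fst.prod (Jm K μ').snd) z ∂(Jm K μ')
      ≤ ∫ z, llr (Jm K α') ((Jm K α').fst.prod (Jm K α').snd) z ∂(Jm K μ') := by
    rw [hidβ, hcancelβ]; linarith
  have hIγ0 : 0 ≤ ∫ z, llr (Jm K (Function.update α' 0 (μ'' 0)))
      ((Jm K (Function.update α' 0 (μ'' 0))).fst.prod
        (Jm K (Function.update α' 0 (μ'' 0))).snd) z
      ∂(Jm K (Function.update α' 0 (μ'' 0))) := myintegral_llr_nonneg hacγ hintγ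
  have hγge : 0 ≤ ∫ z, llr (Jm K α') ((Jm K α').fst.prod (Jm K α').snd) z
      ∂(Jm K (Function.update α' 0 (μ'' 0))) := by
    rw [hidγ, hcancelγ]; linarith
  -- split the integral over the coordinate-0 mixture
  have hsplit : ∫ z, llr (Jm K α') ((Jm K α').fst.prod (Jm K α').snd) z ∂(Jm K α')
      = (1 - ε) * ∫ z, llr (Jm K α') ((Jm K α').fst.prod (Jm K α').snd) z ∂(Jm K μ')
        + ε * ∫ z, llr (Jm K α') ((Jm K α').fst.prod (Jm K α').snd) z
            ∂(Jm K (Function.update α' 0 (μ'' 0))) := by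
    nth_rewrite 1 [hdecomp0]
    rw [integral_add_measure (hPintβ.smul_measure ENNReal.ofReal_ne_top)
      (hPintγ.smul_measure ENNReal.ofReal_ne_top),
      integral_smul_measure, integral_smul_measure,
      ENNReal.toReal_ofReal (by linarith), ENNReal.toReal_ofReal hε0.le]
    simp only [smul_eq_mul]
  have hconcave : (1 - ε) * ∫ z, llr (Jm K μ') ((Jm K μ').fst.prod (Jm K μ').snd) z ∂(Jm K μ')
      ≤ ∫ z, llr (Jm K α') ((Jm K α').fst.prod (Jm K α').snd) z ∂(Jm K α') := by
    rw [hsplit]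
    nlinarith [mul_le_mul_of_nonneg_left hβge (by linarith : (0:ℝ) ≤ 1 - ε),
      mul_le_mul_of_nonneg_left hγge hε0.le]
  -- values of primaryMI
  have hIF0 : 0 ≤ ∫ z, llr (Jm K ν) ((Jm K ν).fst.prod (Jm K ν).snd) z ∂(Jm K ν) :=
    myintegral_llr_nonneg hacF hintF
  have hI'0 : 0 ≤ ∫ z, llr (Jm K μ') ((Jm K μ').fst.prod (Jm K μ').snd) z ∂(Jm K μ') :=
    myintegral_llr_nonneg hacβ hintβ
  have hMI' : primaryMI K μ'
      = ENNReal.ofReal (∫ z, llr (Jm K μ') ((Jm K μ').fst.prod (Jm K μ').snd) z ∂(Jm K μ')) := by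
    rw [primaryMI_eq_klDiv, klDiv, if_pos ⟨hacβ, hintβ⟩]
  have hMIν : primaryMI K ν
      = ENNReal.ofReal (∫ z, llr (Jm K ν) ((Jm K ν).fst.prod (Jm K ν).snd) z ∂(Jm K ν)) := by
    rw [primaryMI_eq_klDiv, klDiv, if_pos ⟨hacF, hintF⟩]
  rw [hMI', hMIν, ENNReal.toReal_ofReal hI'0, ENNReal.toReal_ofReal hIF0]
  -- final arithmetic
  have hk1 : 1 ≤ k := Nat.one_le_iff_ne_zero.mpr (NeZero.ne k)
  have hcard : (Finset.univ.erase (0 : Fin k)).card = k - 1 := by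
    rw [Finset.card_erase_of_mem (Finset.mem_univ 0), Finset.card_univ, Fintype.card_fin]
  rw [hcard] at hineq
  have hcast : ((k - 1 : ℕ) : ℝ) = (k : ℝ) - 1 := by
    rw [Nat.cast_sub hk1, Nat.cast_one]
  rw [hcast] at hineq
  have hpow : (1 - ε) ^ (k - 1 : ℕ) * (1 - ε) = (1 - ε) ^ k := by
    rw [← pow_succ, Nat.sub_add_cancel hk1]
  have hHeB := myHe_le_binaryEntropy hε0 hε1'
  have hk1' : (0:ℝ) ≤ (k : ℝ) - 1 := by
    have : (1:ℝ) ≤ (k : ℝ) := by exact_mod_cast hk1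
    linarith
  have hmul2 := mul_le_mul_of_nonneg_left hconcave
    (pow_nonneg (by linarith : (0:ℝ) ≤ 1 - ε) (k - 1))
  have hineq2 : (1 - ε) ^ k
        * (∫ z, llr (Jm K μ') ((Jm K μ').fst.prod (Jm K μ').snd) z ∂(Jm K μ'))
      - ((k:ℝ) - 1) * ((1 - ε) * Real.log (1 - ε)⁻¹ + ε * Real.log ε⁻¹)
      ≤ ∫ z, llr (Jm K ν) ((Jm K ν).fst.prod (Jm K ν).snd) z ∂(Jm K ν) := by
    rw [← hpow]
    nlinarith [hineq, hmul2]
  nlinarith [hineq2, mul_le_mul_of_nonneg_left hHeB hk1']
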